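/- Under the OCSC recursion over an error-free channel, for every horizon T ≥ 1, every sequence of source symbols {X_t}, every sequence of predictive distributions {p̂_t}, and every target outage level D ∈ [0,1], the reconstructed sequence satisfies (1/T) ∑_{t=1}^T 𝟙{X̂_t ≠ X_t} ≤ D + (η(1−D) + λ_0)/(η T). (Theorem 1) -/
import Mathlib


open scoped Classical

/-- **Theorem 1 (OCSC distortion guarantee, error-free channel).**
Under the OCSC recursion over an error-free channel (threshold `s t = max 0 (lam t)`,
high-probability set `𝒳_t = {x | p t x ≥ s t}`, update
`lam (t+1) = lam t − η (𝟙{X t ∉ 𝒳_t} − D)`, reconstruction `Xhat t = X t` whenever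
`X t ∈ 𝒳_t`), for every horizon `T ≥ 1`, every source sequence, every sequence of
predictive distributions, and every target outage level `D ∈ [0,1]`:
`(1/T) ∑_{t=1}^T 𝟙{Xhat t ≠ X t} ≤ D + (η (1 − D) + lam₀) / (η T)`. -/
theorem ocsc_distortion_guarantee_noiseless
    {𝒳 : Type*} [Fintype 𝒳] [Nonempty 𝒳]
    (X Xhat : ℕ → 𝒳) (p : ℕ → 𝒳 → ℝ)
    (hp0 : ∀ t x, 0 ≤ p t x) (hp1 : ∀ t, ∑ x, p t x = 1)
    (D : ℝ) (hD : 0 ≤ D ∧ D ≤ 1)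
    (η : ℝ) (hη : 0 < η)
    (lam₀ : ℝ) (hlam₀ : 0 < lam₀)
    (lam s : ℕ → ℝ) (hinit : lam 1 = lam₀)
    (hs : ∀ t, s t = max 0 (lam t))
    (hupd : ∀ t, 1 ≤ t →
      lam (t + 1) = lam t - η * ((if p t (X t) < s t then (1 : ℝ) else 0) - D))
    (hrec : ∀ t, 1 ≤ t → s t ≤ p t (X t) → Xhat t = X t)
    (T : ℕ) (hT : 1 ≤ T) :
    (1 / (T : ℝ)) * ∑ t ∈ Finset.Icc 1 T, (if Xhat t ≠ X t then (1 : ℝ) else 0)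
      ≤ D + (η * (1 - D) + lam₀) / (η * T) := by

  have hD0 := hD.1
  have hD1 := hD.2
  -- lower bound on lam
  have hlow : ∀ t, 1 ≤ t → -(η * (1 - D)) ≤ lam t := by
    intro t ht
    induction t, ht using Nat.le_induction with
    | base =>
      rw [hinit]
      nlinarith
    | succ n hn ih =>
      rw [hupd n hn]
      by_cases h : p n (X n) < s n
      · simp only [h, if_pos]
        by_cases h2 : lam n ≤ 0
        · exfalso
          have hs0 : s n = 0 := by rw [hs n]; exact max_eq_left h2
          rw [hs0] at h
          exact absurd h (not_lt.mpr (hp0 n (X n)))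
        · push_neg at h2
          nlinarith
      · simp only [h, if_neg, not_false_iff]
        nlinarith
  -- each error indicator is bounded by the outage indicator
  have hptw : ∀ t ∈ Finset.Icc 1 T,
      (if Xhat t ≠ X t then (1 : ℝ) else 0)
        ≤ (if p t (X t) < s t then (1 : ℝ) else 0) := by
    intro t htm
    have ht1 : 1 ≤ t := (Finset.mem_Icc.mp htm).1
    by_cases h : p t (X t) < s t
    · simp only [h, if_pos]
      split <;> norm_num
    · push_neg at h
      have := hrec t ht1 h
      simp [this, not_lt.mpr h]
  -- outage indicator as telescoping
  have hind : ∀ t, 1 ≤ t →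
      (if p t (X t) < s t then (1 : ℝ) else 0) = D + (lam t - lam (t + 1)) / η := by
    intro t ht
    have h2 : lam t - lam (t + 1)
        = η * ((if p t (X t) < s t then (1 : ℝ) else 0) - D) := by
      linarith [hupd t ht]
    rw [h2, mul_div_cancel_left₀ _ hη.ne']
    ring
  have hsum1 : ∑ t ∈ Finset.Icc 1 T, (if p t (X t) < s t then (1 : ℝ) else 0)
      = T * D + (lam 1 - lam (T + 1)) / η := by
    have : ∑ t ∈ Finset.Icc 1 T, (if p t (X t) < s t then (1 : ℝ) else 0)
        = ∑ t ∈ Finset.Icc 1 T, (D + (lam t - lam (t + 1)) / η) := by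
      apply Finset.sum_congr rfl
      intro t htm
      exact hind t (Finset.mem_Icc.mp htm).1
    rw [this, Finset.sum_add_distrib]
    have hcard : (Finset.Icc 1 T).card = T := by simp
    rw [Finset.sum_const, hcard]
    have htel : ∀ n : ℕ,
        ∑ t ∈ Finset.Icc 1 n, (lam t - lam (t + 1)) = lam 1 - lam (n + 1) := by
      intro n
      induction n with
      | zero => simp
      | succ k ih =>
        rw [Finset.sum_Icc_succ_top (by omega), ih]
        ring
    rw [← Finset.sum_div, htel T]
    ring
  have hsum : ∑ t ∈ Finset.Icc 1 T, (if Xhat t ≠ X t then (1 : ℝ) else 0)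
      ≤ T * D + (lam₀ + η * (1 - D)) / η := by
    calc ∑ t ∈ Finset.Icc 1 T, (if Xhat t ≠ X t then (1 : ℝ) else 0)
        ≤ ∑ t ∈ Finset.Icc 1 T, (if p t (X t) < s t then (1 : ℝ) else 0) :=
          Finset.sum_le_sum hptw
      _ = T * D + (lam 1 - lam (T + 1)) / η := hsum1
      _ ≤ T * D + (lam₀ + η * (1 - D)) / η := by
          have := hlow (T + 1) (by omega)
          rw [hinit]
          have : lam₀ - lam (T + 1) ≤ lam₀ + η * (1 - D) := by linarith
          gcongr
  have hTpos : (0 : ℝ) < T := by exact_mod_cast hT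
  have key : (1 / (T : ℝ)) * (T * D + (lam₀ + η * (1 - D)) / η)
      = D + (η * (1 - D) + lam₀) / (η * T) := by
    field_simp
    ring
  calc (1 / (T : ℝ)) * ∑ t ∈ Finset.Icc 1 T, (if Xhat t ≠ X t then (1 : ℝ) else 0)
      ≤ (1 / (T : ℝ)) * (T * D + (lam₀ + η * (1 - D)) / η) := by
        apply mul_le_mul_of_nonneg_left hsum
        positivity
    _ = D + (η * (1 - D) + lam₀) / (η * T) := key
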